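/- Given a partial function H and α ≥ 1, there is no coverage function f with f_i ≤ f(T_i) ≤ α f_i for all i ∈ [n] if and only if there exist reals l_1,…,l_n such that Σ_{i : S∩T_i ≠ ∅} l_i ≤ 0 for all S ⊆ [m], and −α Σ_{i : l_i < 0} f_i l_i < Σ_{i : l_i > 0} f_i l_i. -/

import Mathlib

open Finset

/-- `f` is a coverage function. -/
def IsCoverage (m : ℕ) (f : Finset (Fin m) → ℝ) : Prop :=
  ∃ (k : ℕ) (wt : Fin k → ℝ) (A : Fin m → Finset (Fin k)),
    (∀ u, 0 ≤ wt u) ∧ ∀ T : Finset (Fin m), f T = ∑ u ∈ T.biUnion A, wt u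

/-- Pairing on `κ → ℝ`. -/
def pr {κ : Type*} [Fintype κ] (x y : κ → ℝ) : ℝ := ∑ j, x j * y j

section pr
variable {κ : Type*} [Fintype κ]

theorem pr_sub_left (x x' y : κ → ℝ) : pr (x - x') y = pr x y - pr x' y := by
  simp [pr, sub_mul, Finset.sum_sub_distrib]

theorem pr_sub_right (x y y' : κ → ℝ) : pr x (y - y') = pr x y - pr x y' := by
  simp [pr, mul_sub, Finset.sum_sub_distrib]

theorem pr_smul_left (a : ℝ) (x y : κ → ℝ) : pr (a • x) y = a * pr x y := by
  simp [pr, Finset.mul_sum, mul_assoc]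

theorem pr_smul_right (a : ℝ) (x y : κ → ℝ) : pr x (a • y) = a * pr x y := by
  simp only [pr, Pi.smul_apply, smul_eq_mul, Finset.mul_sum]
  exact Finset.sum_congr rfl fun i _ => by ring

theorem pr_sum_left {ι : Type*} (s : Finset ι) (f : ι → κ → ℝ) (y : κ → ℝ) :
    pr (∑ i ∈ s, f i) y = ∑ i ∈ s, pr (f i) y := by
  simp only [pr, Finset.sum_apply, Finset.sum_mul]
  exact Finset.sum_comm

theorem pr_self_pos {b : κ → ℝ} (hb : b ≠ 0) : 0 < pr b b := by
  have ⟨j, hj⟩ : ∃ j, b j ≠ 0 := by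
    by_contra h; push_neg at h; exact hb (funext h)
  exact Finset.sum_pos' (fun i _ => mul_self_nonneg _) ⟨j, Finset.mem_univ j, mul_self_pos.2 hj⟩

end pr

theorem farkas {κ : Type*} [Fintype κ] (k : ℕ) (v : Fin k → κ → ℝ) (b : κ → ℝ) :
    (∃ c : Fin k → ℝ, (∀ i, 0 ≤ c i) ∧ b = ∑ i, c i • v i) ∨
      (∃ y : κ → ℝ, (∀ i, pr (v i) y ≤ 0) ∧ 0 < pr b y) := by
  induction k generalizing b with
  | zero =>
    by_cases hb : b = 0
    · exact Or.inl ⟨0, fun i => le_rfl, by simp [hb]⟩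
    · exact Or.inr ⟨b, fun i => i.elim0, pr_self_pos hb⟩
  | succ k ih =>
    set p := v (Fin.last k) with hp_def
    set v' : Fin k → κ → ℝ := fun i => v i.castSucc with hv'_def
    rcases ih v' b with ⟨c, hc, hb⟩ | ⟨y, hy, hby⟩
    · left
      refine ⟨Fin.snoc c 0, ?_, ?_⟩
      · intro i
        induction i using Fin.lastCases with
        | last => simp
        | cast j => simpa using hc j
      · rw [Fin.sum_univ_castSucc]
        simp [hb]
        rfl
    · by_cases hp : pr p y ≤ 0
      · right
        refine ⟨y, ?_, hby⟩
        intro i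
        induction i using Fin.lastCases with
        | last => exact hp
        | cast j => exact hy j
      · push_neg at hp
        have hα : pr p y ≠ 0 := ne_of_gt hp
        set F : (κ → ℝ) → (κ → ℝ) := fun u => u - (pr u y / pr p y) • p with hF_def
        rcases ih (fun i => F (v' i)) (F b) with ⟨c, hc, hb'⟩ | ⟨z, hz, hbz⟩
        · left
          set μ := (pr b y - ∑ i, c i * pr (v' i) y) / pr p y with hμ_def
          have hμ : 0 ≤ μ := by
            apply div_nonneg _ (le_of_lt hp)
            have : ∑ i, c i * pr (v' i) y ≤ 0 :=
              Finset.sum_nonpos fun i _ => mul_nonpos_of_nonneg_of_nonpos (hc i) (hy i)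
            linarith
          refine ⟨Fin.snoc c μ, ?_, ?_⟩
          · intro i
            induction i using Fin.lastCases with
            | last => simpa using hμ
            | cast j => simpa using hc j
          · rw [Fin.sum_univ_castSucc]
            simp only [Fin.snoc_castSucc, Fin.snoc_last]
            have hsum : ∑ i, c i • F (v' i)
                = ∑ i, c i • v' i - ((∑ i, c i * pr (v' i) y) / pr p y) • p := by
              simp only [hF_def, smul_sub, Finset.sum_sub_distrib, smul_smul]
              rw [← Finset.sum_smul, Finset.sum_div]
              congr 1
              congr 1
              exact Finset.sum_congr rfl fun i _ => by field_simp
            have hFb : F b = b - (pr b y / pr p y) • p := rfl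
            rw [hFb, hsum] at hb'
            have hb2 : b = ∑ i, c i • v' i - ((∑ i, c i * pr (v' i) y) / pr p y) • p
                + (pr b y / pr p y) • p := by
              rw [← hb']; abel
            have hgoal : ∑ i, c i • v' i - ((∑ i, c i * pr (v' i) y) / pr p y) • p
                + (pr b y / pr p y) • p = ∑ i, c i • v' i + μ • p := by
              rw [hμ_def, sub_div, sub_smul]; abel
            rw [hb2, hgoal]
        · right
          refine ⟨z - (pr p z / pr p y) • y, ?_, ?_⟩
          · intro i
            induction i using Fin.lastCases with
            | last =>
              rw [pr_sub_right, pr_smul_right]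
              field_simp
              rw [← hp_def]; simp
            | cast j =>
              have := hz j
              rw [hF_def] at this
              rw [pr_sub_left, pr_smul_left] at this
              rw [pr_sub_right, pr_smul_right]
              have heq : pr p z / pr p y * pr (v' j) y = pr (v' j) y / pr p y * pr p z := by
                field_simp
              linarith [this]
          · have := hbz
            rw [hF_def, pr_sub_left, pr_smul_left] at this
            rw [pr_sub_right, pr_smul_right]
            have heq : pr p z / pr p y * pr b y = pr b y / pr p y * pr p z := by
              field_simp
            linarith

theorem farkas' {κ ι : Type*} [Fintype κ] [Fintype ι] (v : ι → κ → ℝ) (b : κ → ℝ) :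
    (∃ c : ι → ℝ, (∀ i, 0 ≤ c i) ∧ b = ∑ i, c i • v i) ∨
      (∃ y : κ → ℝ, (∀ i, pr (v i) y ≤ 0) ∧ 0 < pr b y) := by
  classical
  set e := Fintype.equivFin ι with he
  rcases farkas (Fintype.card ι) (fun j => v (e.symm j)) b with ⟨c, hc, hb⟩ | ⟨y, hy, hby⟩
  · left
    refine ⟨fun i => c (e i), fun i => hc _, ?_⟩
    rw [hb]
    exact (Fintype.sum_equiv e (fun i => c (e i) • v i) (fun j => c j • v (e.symm j))
      (fun i => by simp)).symm
  · right
    exact ⟨y, fun i => by simpa using hy (e i), hby⟩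

theorem coverage_of_w (m : ℕ) (w : Finset (Fin m) → ℝ) (hw : ∀ S, 0 ≤ w S) :
    ∃ f : Finset (Fin m) → ℝ, IsCoverage m f ∧
      ∀ T' : Finset (Fin m),
        f T' = ∑ S ∈ univ.filter (fun S => (S ∩ T').Nonempty), w S := by
  classical
  set e := Fintype.equivFin (Finset (Fin m)) with he
  refine ⟨fun T' => ∑ S ∈ univ.filter (fun S => (S ∩ T').Nonempty), w S,
    ⟨Fintype.card (Finset (Fin m)), fun u => w (e.symm u),
     fun j => univ.filter (fun u => j ∈ e.symm u), fun u => hw _, ?_⟩, fun _ => rfl⟩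
  intro T'
  have hset : T'.biUnion (fun j => univ.filter (fun u => j ∈ e.symm u))
      = univ.filter (fun u => ((e.symm u) ∩ T').Nonempty) := by
    ext u
    simp only [Finset.mem_biUnion, Finset.mem_filter, Finset.mem_univ, true_and,
      Finset.Nonempty, Finset.mem_inter]
    constructor
    · rintro ⟨j, hj1, hj2⟩; exact ⟨j, hj2, hj1⟩
    · rintro ⟨j, hj1, hj2⟩; exact ⟨j, hj2, hj1⟩
  rw [hset]
  simp only [Finset.sum_filter]
  exact (Fintype.sum_equiv e.symm _ _ (fun u => rfl)).symm

theorem w_of_coverage (m : ℕ) (f : Finset (Fin m) → ℝ) (hf : IsCoverage m f) :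
    ∃ w : Finset (Fin m) → ℝ, (∀ S, 0 ≤ w S) ∧
      ∀ T' : Finset (Fin m),
        f T' = ∑ S ∈ univ.filter (fun S => (S ∩ T').Nonempty), w S := by
  classical
  obtain ⟨k, wt, A, hwt, hfA⟩ := hf
  set B : Fin k → Finset (Fin m) := fun u => univ.filter (fun j => u ∈ A j) with hB
  refine ⟨fun S => ∑ u ∈ univ.filter (fun u => B u = S), wt u,
    fun S => Finset.sum_nonneg (fun u _ => hwt u), ?_⟩
  intro T'
  rw [hfA]
  rw [Finset.sum_fiberwise_eq_sum_filter univ (univ.filter (fun S => (S ∩ T').Nonempty)) B wt]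
  congr 1
  ext u
  simp only [Finset.mem_filter, Finset.mem_univ, true_and, Finset.mem_biUnion, hB,
    Finset.Nonempty, Finset.mem_inter]
  tauto

theorem pr_single {κ : Type*} [Fintype κ] [DecidableEq κ] (a : κ) (y : κ → ℝ) :
    pr (Pi.single a (1:ℝ)) y = y a := by
  simp [pr, Pi.single_apply, ite_mul]

theorem pr_neg_left {κ : Type*} [Fintype κ] (x y : κ → ℝ) : pr (-x) y = -pr x y := by
  simp [pr]

/-- Farkas-type alternative: there is no coverage function `f` with
`f_i ≤ f(T_i) ≤ α f_i` for all `i` iff there exist reals `l_1, …, l_n` with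
`∑_{i : S ∩ T_i ≠ ∅} l_i ≤ 0` for all `S ⊆ [m]` and
`-α ∑_{i : l_i < 0} f_i l_i < ∑_{i : l_i > 0} f_i l_i`. -/
theorem stmt_8 (m n : ℕ) (T : Fin n → Finset (Fin m)) (fv : Fin n → ℝ)
    (hfv : ∀ i, 0 ≤ fv i) (α : ℝ) (hα : 1 ≤ α) :
    (¬ ∃ f : Finset (Fin m) → ℝ, IsCoverage m f ∧
        ∀ i, fv i ≤ f (T i) ∧ f (T i) ≤ α * fv i) ↔
      ∃ l : Fin n → ℝ,
        (∀ S : Finset (Fin m),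
          ∑ i ∈ Finset.univ.filter (fun i => ((S ∩ T i).Nonempty)), l i ≤ 0) ∧
        (-α * ∑ i ∈ Finset.univ.filter (fun i => l i < 0), fv i * l i <
          ∑ i ∈ Finset.univ.filter (fun i => 0 < l i), fv i * l i) := by
  classical
  set κ := (Fin n ⊕ Fin n) with hκ
  set χ : Finset (Fin m) → Fin n → ℝ :=
    fun S i => if (S ∩ T i).Nonempty then 1 else 0 with hχ
  set gen : (Finset (Fin m) ⊕ (Fin n ⊕ Fin n)) → κ → ℝ :=
    Sum.elim (fun S => Sum.elim (χ S) (χ S))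
      (Sum.elim (fun i => -Pi.single (Sum.inl i) 1) (fun i => Pi.single (Sum.inr i) 1)) with hgen
  set bvec : κ → ℝ := Sum.elim fv (fun i => α * fv i) with hbvec
  -- feasibility iff cone membership
  have hfeas : (∃ f : Finset (Fin m) → ℝ, IsCoverage m f ∧
        ∀ i, fv i ≤ f (T i) ∧ f (T i) ≤ α * fv i) ↔
      (∃ c : (Finset (Fin m) ⊕ (Fin n ⊕ Fin n)) → ℝ, (∀ x, 0 ≤ c x) ∧
        bvec = ∑ x, c x • gen x) := by
    constructor
    · rintro ⟨f, hcov, hbd⟩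
      obtain ⟨w, hw, hfw⟩ := w_of_coverage m f hcov
      refine ⟨Sum.elim w (Sum.elim (fun i => f (T i) - fv i) (fun i => α * fv i - f (T i))),
        ?_, ?_⟩
      · rintro (S | i | i)
        · exact hw S
        · simpa using (hbd i).1
        · simpa using (hbd i).2
      · funext j
        have hz : ∀ j : κ, (∑ x, (Sum.elim w (Sum.elim (fun i => f (T i) - fv i)
            (fun i => α * fv i - f (T i))) x) • gen x) j
            = ∑ x, (Sum.elim w (Sum.elim (fun i => f (T i) - fv i)
            (fun i => α * fv i - f (T i))) x) * gen x j := by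
          intro j; rw [Finset.sum_apply]; rfl
        rw [hz]
        rw [Fintype.sum_sum_type]
        rw [Fintype.sum_sum_type]
        have hSum : ∀ i : Fin n, ∑ S : Finset (Fin m), w S * χ S i = f (T i) := by
          intro i
          rw [hfw (T i), Finset.sum_filter]
          exact Finset.sum_congr rfl fun S _ => by by_cases h : (S ∩ T i).Nonempty <;>
            simp [hχ, h]
        match j with
        | Sum.inl i =>
          simp only [hgen, Sum.elim_inl, Sum.elim_inr, Pi.neg_apply, Pi.single_apply,
            mul_ite, mul_one, mul_zero, mul_neg, Sum.inl.injEq, Sum.inr.injEq, hbvec,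
            reduceCtorEq, if_false, Finset.sum_neg_distrib, Finset.sum_ite_eq,
            Finset.sum_ite_eq', Finset.mem_univ, if_true, Finset.sum_const_zero,
            add_zero, neg_zero]
          rw [hSum i]; ring
        | Sum.inr i =>
          simp only [hgen, Sum.elim_inl, Sum.elim_inr, Pi.neg_apply, Pi.single_apply,
            mul_ite, mul_one, mul_zero, mul_neg, Sum.inl.injEq, Sum.inr.injEq, hbvec,
            reduceCtorEq, if_false, Finset.sum_neg_distrib, Finset.sum_ite_eq,
            Finset.sum_ite_eq', Finset.mem_univ, if_true, Finset.sum_const_zero,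
            add_zero, neg_zero, zero_add]
          rw [hSum i]
          have h3 : (∑ x : Fin n, if (Sum.inr i : κ) = Sum.inr x then α * fv x - f (T x) else 0)
              = α * fv i - f (T i) := by
            have hiff : ∀ x : Fin n, ((Sum.inr i : κ) = Sum.inr x) = (i = x) :=
              fun x => by simp
            simp only [hiff, Finset.sum_ite_eq, Finset.mem_univ, if_true]
          rw [h3]; ring
    · rintro ⟨c, hc, hb⟩
      obtain ⟨f, hcov, hfw⟩ := coverage_of_w m (fun S => c (Sum.inl S)) (fun S => hc _)
      refine ⟨f, hcov, ?_⟩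
      intro i
      have hSum : ∀ i : Fin n, ∑ S : Finset (Fin m), c (Sum.inl S) * χ S i = f (T i) := by
        intro i
        rw [hfw (T i), Finset.sum_filter]
        exact Finset.sum_congr rfl fun S _ => by by_cases h : (S ∩ T i).Nonempty <;>
          simp [hχ, h]
      have e1 := congrFun hb (Sum.inl i : κ)
      have e2 := congrFun hb (Sum.inr i : κ)
      rw [Finset.sum_apply] at e1 e2
      simp only [Pi.smul_apply, smul_eq_mul] at e1 e2
      rw [Fintype.sum_sum_type, Fintype.sum_sum_type] at e1 e2
      simp only [hgen, Sum.elim_inl, Sum.elim_inr, Pi.neg_apply, Pi.single_apply,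
        mul_ite, mul_one, mul_zero, mul_neg, Sum.inl.injEq, Sum.inr.injEq, hbvec,
        reduceCtorEq, if_false, Finset.sum_neg_distrib, Finset.sum_ite_eq,
        Finset.sum_ite_eq', Finset.mem_univ, if_true, Finset.sum_const_zero,
        add_zero, neg_zero, zero_add] at e1 e2
      rw [hSum i] at e1 e2
      have h3 : (∑ x : Fin n, if (Sum.inr i : κ) = Sum.inr x
          then c (Sum.inr (Sum.inr x)) else 0) = c (Sum.inr (Sum.inr i)) := by
        have hiff : ∀ x : Fin n, ((Sum.inr i : κ) = Sum.inr x) = (i = x) :=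
          fun x => by simp
        simp only [hiff, Finset.sum_ite_eq, Finset.mem_univ, if_true]
      rw [h3] at e2
      have := hc (Sum.inr (Sum.inl i))
      have := hc (Sum.inr (Sum.inr i))
      constructor <;> linarith
  have prS : ∀ (S : Finset (Fin m)) (y : κ → ℝ), pr (Sum.elim (χ S) (χ S)) y
      = ∑ i ∈ univ.filter (fun i => (S ∩ T i).Nonempty),
          (y (Sum.inl i) + y (Sum.inr i)) := by
    intro S y
    show (∑ j : κ, Sum.elim (χ S) (χ S) j * y j) = _
    rw [Fintype.sum_sum_type]
    simp only [Sum.elim_inl, Sum.elim_inr, hχ, ite_mul, one_mul, zero_mul]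
    rw [Finset.sum_filter]
    rw [← Finset.sum_add_distrib]
    apply Finset.sum_congr rfl
    intro i _
    by_cases h : (S ∩ T i).Nonempty <;> simp [h]
  have prb : ∀ y : κ → ℝ, pr bvec y
      = ∑ i : Fin n, fv i * y (Sum.inl i) + ∑ i : Fin n, (α * fv i) * y (Sum.inr i) := by
    intro y
    show (∑ j : κ, bvec j * y j) = _
    rw [Fintype.sum_sum_type]
    rfl
  constructor
  · intro hne
    rcases farkas' gen bvec with ⟨c, hc, hb⟩ | ⟨y, hy, hby⟩
    · exact absurd (hfeas.mpr ⟨c, hc, hb⟩) hne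
    · set l : Fin n → ℝ := fun i => y (Sum.inl i) + y (Sum.inr i) with hl
      have hu : ∀ i, 0 ≤ y (Sum.inl i) := by
        intro i
        have h := hy (Sum.inr (Sum.inl i))
        simp only [hgen, Sum.elim_inr, Sum.elim_inl] at h
        rw [pr_neg_left, pr_single] at h
        linarith
      have hv : ∀ i, y (Sum.inr i) ≤ 0 := by
        intro i
        have h := hy (Sum.inr (Sum.inr i))
        simp only [hgen, Sum.elim_inr] at h
        rw [pr_single] at h
        exact h
      refine ⟨l, ?_, ?_⟩
      · intro S
        have h := hy (Sum.inl S)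
        simp only [hgen, Sum.elim_inl] at h
        rw [prS S y] at h
        exact h
      · rw [prb y] at hby
        have key : ∑ i ∈ univ.filter (fun i => 0 < l i), fv i * l i
            + α * ∑ i ∈ univ.filter (fun i => l i < 0), fv i * l i
            ≥ ∑ i : Fin n, fv i * y (Sum.inl i) + ∑ i : Fin n, (α * fv i) * y (Sum.inr i) := by
          rw [Finset.sum_filter, Finset.mul_sum, Finset.sum_filter,
            ← Finset.sum_add_distrib, ← Finset.sum_add_distrib]
          apply Finset.sum_le_sum
          intro i _
          have hui := hu i
          have hvi := hv i
          rcases lt_trichotomy (l i) 0 with h | h | h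
          · rw [if_neg (by simpa using not_lt.2 (le_of_lt h)), if_pos h]
            have hli : l i = y (Sum.inl i) + y (Sum.inr i) := rfl
            rw [hli]
            nlinarith [mul_nonneg (mul_nonneg (sub_nonneg.2 hα) (hfv i)) hui]
          · rw [if_neg (by simp [h]), if_neg (by simp [h])]
            have hvu : y (Sum.inr i) = - y (Sum.inl i) := by
              have hli : l i = y (Sum.inl i) + y (Sum.inr i) := rfl
              rw [hli] at h; linarith
            rw [hvu]
            nlinarith [mul_nonneg (mul_nonneg (sub_nonneg.2 hα) (hfv i)) hui]
          · rw [if_pos h, if_neg (by simpa using not_lt.2 (le_of_lt h))]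
            have hli : l i = y (Sum.inl i) + y (Sum.inr i) := rfl
            rw [hli]
            nlinarith [mul_nonneg (mul_nonneg (sub_nonneg.2 hα) (hfv i)) (neg_nonneg.2 hvi)]
        linarith
  · rintro ⟨l, h1, h2⟩ ⟨f, hcov, hbd⟩
    obtain ⟨w, hw, hfw⟩ := w_of_coverage m f hcov
    have hD1 : ∑ i : Fin n, l i * f (T i) ≤ 0 := by
      have step1 : ∑ i : Fin n, l i * f (T i)
          = ∑ i : Fin n, ∑ S : Finset (Fin m),
              (if (S ∩ T i).Nonempty then l i * w S else 0) := by
        apply Finset.sum_congr rfl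
        intro i _
        rw [hfw (T i), Finset.mul_sum, Finset.sum_filter]
      rw [step1, Finset.sum_comm]
      apply Finset.sum_nonpos
      intro S _
      have hrow : ∑ i : Fin n, (if (S ∩ T i).Nonempty then l i * w S else 0)
          = (∑ i ∈ univ.filter (fun i => (S ∩ T i).Nonempty), l i) * w S := by
        rw [Finset.sum_filter, Finset.sum_mul]
        apply Finset.sum_congr rfl
        intro i _
        by_cases h : (S ∩ T i).Nonempty <;> simp [h]
      rw [hrow]
      exact mul_nonpos_of_nonpos_of_nonneg (h1 S) (hw S)
    have hD2 : 0 < ∑ i : Fin n, l i * f (T i) := by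
      have key : ∑ i : Fin n, l i * f (T i)
          ≥ ∑ i ∈ univ.filter (fun i => 0 < l i), fv i * l i
            + α * ∑ i ∈ univ.filter (fun i => l i < 0), fv i * l i := by
        rw [Finset.sum_filter, Finset.mul_sum, Finset.sum_filter,
          ← Finset.sum_add_distrib]
        apply Finset.sum_le_sum
        intro i _
        have hb1 := (hbd i).1
        have hb2 := (hbd i).2
        rcases lt_trichotomy (l i) 0 with h | h | h
        · rw [if_neg (by simpa using not_lt.2 (le_of_lt h)), if_pos h]
          nlinarith
        · simp [h]
        · rw [if_pos h, if_neg (by simpa using not_lt.2 (le_of_lt h))]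
          nlinarith
      linarith
    linarith
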